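/- Let P be any interval partition of [n_1,…,n_k]. For each i ∈ {1,…,k}, the interval of P containing the standard basis vector e_i (the vector with a 1 in coordinate i and 0 elsewhere) has bottom element e_i; let a(i) denote its top element. Then for any i ≠ j, if a(i)_j > 0 then a(j)_i = 0. -/

import Mathlib

/-- The poset `[n₁,…,n_k]`: nonzero vectors `x : Fin k → ℕ` with `x i ≤ n i` for all `i`,
ordered componentwise. -/
def ground {k : ℕ} (n : Fin k → ℕ) : Set (Fin k → ℕ) :=
  {x | x ≠ 0 ∧ ∀ i, x i ≤ n i}

/-- The depth of an element: the sum of its coordinates. -/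
def depthv {k : ℕ} (x : Fin k → ℕ) : ℕ := ∑ i, x i

/-- An interval partition of the poset `[n₁,…,n_k]`: a collection of pairs `(X,Y)` with
`X ≤ Y`, both in the poset, whose intervals `[X,Y] = Set.Icc X Y` are pairwise disjoint
and cover the poset. (Since `X` is nonzero and `Y` is bounded by `n`, each such interval
is a nonempty subset of the poset.) -/
structure IntervalPartition (k : ℕ) (n : Fin k → ℕ) where
  pairs : Set ((Fin k → ℕ) × (Fin k → ℕ))
  bot_mem : ∀ p ∈ pairs, p.1 ∈ ground n
  top_mem : ∀ p ∈ pairs, p.2 ∈ ground n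
  bot_le_top : ∀ p ∈ pairs, p.1 ≤ p.2
  covers : ∀ x ∈ ground n, ∃ p ∈ pairs, x ∈ Set.Icc p.1 p.2
  pairwise_disjoint : ∀ p ∈ pairs, ∀ q ∈ pairs, p ≠ q →
    Disjoint (Set.Icc p.1 p.2) (Set.Icc q.1 q.2)

/-- The new depth of an interval partition: the minimum over its intervals `[X,Y]`
of `depth Y`. -/
noncomputable def ndepthP {k : ℕ} {n : Fin k → ℕ} (P : IntervalPartition k n) : ℕ :=
  sInf ((fun p => depthv p.2) '' P.pairs)

/-- The new depth of the poset `[n₁,…,n_k]`: the maximum of `ndepthP P` over all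
interval partitions `P`. -/
noncomputable def ndepth {k : ℕ} (n : Fin k → ℕ) : ℕ :=
  sSup (Set.range (fun P : IntervalPartition k n => ndepthP P))

/-- For a 0-1 vector `u` (as a Boolean vector), `sVec n u` has `i`-th coordinate `n i`
if `u i = true` and `0` otherwise. -/
def sVec {k : ℕ} (n : Fin k → ℕ) (u : Fin k → Bool) : Fin k → ℕ :=
  fun i => if u i then n i else 0


lemma bot_eq_basis {k : ℕ} {n : Fin k → ℕ} (P : IntervalPartition k n)
    (i : Fin k) (p : (Fin k → ℕ) × (Fin k → ℕ)) (hp : p ∈ P.pairs)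
    (hpi : (fun t => if t = i then 1 else 0) ∈ Set.Icc p.1 p.2) :
    p.1 = (fun t => if t = i then 1 else 0) := by
  have hne := (P.bot_mem p hp).1
  have hle : p.1 ≤ fun t => if t = i then 1 else 0 := hpi.1
  have hzero : ∀ t, t ≠ i → p.1 t = 0 := by
    intro t ht
    have := hle t
    simpa [ht] using this
  have hii : p.1 i = 1 := by
    have h1 : p.1 i ≤ 1 := by simpa using hle i
    rcases Nat.lt_or_ge (p.1 i) 1 with h | h
    · exfalso
      apply hne
      funext t
      by_cases ht : t = i
      · subst ht; simp only [Pi.zero_apply]; omega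
      · simpa using hzero t ht
    · omega
  funext t
  by_cases ht : t = i
  · subst ht; simpa using hii
  · simp [ht, hzero t ht]

/-- for any interval partition `P` of `[n₁,…,n_k]`, the interval containing
the standard basis vector `e i` has bottom `e i`; denoting its top by `a(i)`, for `i ≠ j`,
if `a(i) j > 0` then `a(j) i = 0`. -/
theorem stmt1 (k : ℕ) (hk : 1 ≤ k) (n : Fin k → ℕ) (hn : ∀ i, 1 ≤ n i)
    (P : IntervalPartition k n) (i j : Fin k) (hij : i ≠ j)
    (p q : (Fin k → ℕ) × (Fin k → ℕ)) (hp : p ∈ P.pairs) (hq : q ∈ P.pairs)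
    (hpi : (fun t => if t = i then 1 else 0) ∈ Set.Icc p.1 p.2)
    (hqj : (fun t => if t = j then 1 else 0) ∈ Set.Icc q.1 q.2) :
    p.1 = (fun t => if t = i then 1 else 0) ∧
    q.1 = (fun t => if t = j then 1 else 0) ∧
    (0 < p.2 j → q.2 i = 0) := by
  have hp1 := bot_eq_basis P i p hp hpi
  have hq1 := bot_eq_basis P j q hq hqj
  refine ⟨hp1, hq1, ?_⟩
  intro hpj
  by_contra hqi
  have hqi' : 0 < q.2 i := Nat.pos_of_ne_zero hqi
  set v : Fin k → ℕ := fun t => if t = i then 1 else if t = j then 1 else 0 with hv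
  have hvp : v ∈ Set.Icc p.1 p.2 := by
    constructor
    · intro t
      rw [hp1]
      by_cases ht : t = i <;> simp [hv, ht]
    · intro t
      by_cases hti : t = i
      · subst hti
        have := hpi.2 t
        simpa [hv] using this
      · by_cases htj : t = j
        · subst htj; simpa [hv, hti] using (show 1 ≤ p.2 t from hpj)
        · simp [hv, hti, htj]
  have hvq : v ∈ Set.Icc q.1 q.2 := by
    constructor
    · intro t
      rw [hq1]
      by_cases ht : t = j
      · subst ht; simp [hv, Ne.symm hij]
      · simp [hv, ht]
    · intro t
      by_cases hti : t = i
      · subst hti; simpa [hv] using (show 1 ≤ q.2 t from hqi')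
      · by_cases htj : t = j
        · subst htj
          have := hqj.2 t
          simpa [hv, hti] using this
        · simp [hv, hti, htj]
  have hpq : p ≠ q := by
    intro h
    have : p.1 i = q.1 i := by rw [h]
    rw [hp1, hq1] at this
    simp [hij, Ne.symm hij] at this
  exact Set.disjoint_left.mp (P.pairwise_disjoint p hp q hq hpq) hvp hvq
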